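/- Fix q ∈ V and a tree ordering of V from a spanning tree rooted at q. If D' is minimal under the order ≺ among all divisors linearly equivalent to D that are nonnegative away from q, then D' is q-reduced. -/

import Mathlib

open Finset

/-- A finite loopless undirected multigraph on vertex set `V`, given by symmetric
edge multiplicities. -/
structure Multigraph (V : Type) where
  E : V → V → ℕ
  symm : ∀ u v, E u v = E v u
  loopless : ∀ v, E v v = 0

variable {V : Type} [Fintype V] [DecidableEq V]

/-- The valence (degree) of a vertex: number of incident edges. -/
def Multigraph.val (G : Multigraph V) (v : V) : ℕ := ∑ w, G.E v w

/-- Connectivity of a multigraph. -/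
def Multigraph.Connected (G : Multigraph V) : Prop :=
  ∀ u v : V, Relation.ReflTransGen (fun a b => 0 < G.E a b) u v

/-- Degree of a divisor. -/
def divDeg (D : V → ℤ) : ℤ := ∑ v, D v

/-- The graph Laplacian applied to a firing script. -/
def lap (G : Multigraph V) (σ : V → ℤ) : V → ℤ :=
  fun v => ∑ w, (G.E v w : ℤ) * (σ v - σ w)

/-- Lending move at `v`. -/
def lend (G : Multigraph V) (D : V → ℤ) (v : V) : V → ℤ :=
  fun w => if w = v then D v - (G.val v : ℤ) else D w + (G.E v w : ℤ)

/-- Borrowing move at `v`. -/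
def borrow (G : Multigraph V) (D : V → ℤ) (v : V) : V → ℤ :=
  fun w => if w = v then D v + (G.val v : ℤ) else D w - (G.E v w : ℤ)

/-- Linear equivalence: generated by lending moves. -/
def LinEquiv (G : Multigraph V) : (V → ℤ) → (V → ℤ) → Prop :=
  Relation.ReflTransGen (fun D D' => ∃ v, D' = lend G D v)

/-- Number of edges from `v` to vertices outside `S`. -/
def outdegS (G : Multigraph V) (S : Finset V) (v : V) : ℕ := ∑ w ∈ Sᶜ, G.E v w

/-- Fire all vertices of `S` simultaneously once. -/
def fireSet (G : Multigraph V) (D : V → ℤ) (S : Finset V) : V → ℤ :=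
  fun v => if v ∈ S then D v - (outdegS G S v : ℤ) else D v + ∑ w ∈ S, (G.E v w : ℤ)

/-- A divisor is `q`-reduced: nonnegative away from `q`, and no nonempty subset of
`V \ {q}` can be legally fired (every such `S` has a vertex with fewer chips than its
outdegree from `S`). -/
def QReduced (G : Multigraph V) (q : V) (D : V → ℤ) : Prop :=
  (∀ v, v ≠ q → 0 ≤ D v) ∧
  ∀ S : Finset V, S.Nonempty → (∀ v ∈ S, v ≠ q) → ∃ v ∈ S, D v < (outdegS G S v : ℤ)

/-- The order `≺` induced by a tree ordering (given as an enumeration of the vertices):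
smaller degree, or equal degree and bigger at the first vertex where they differ. -/
def Prec (ord : V ≃ Fin (Fintype.card V)) (A B : V → ℤ) : Prop :=
  divDeg A < divDeg B ∨
    (divDeg A = divDeg B ∧ ∃ i : Fin (Fintype.card V),
      B (ord.symm i) < A (ord.symm i) ∧ ∀ j : Fin (Fintype.card V), j < i →
        A (ord.symm j) = B (ord.symm j))


lemma linEquiv_fire (G : Multigraph V) (S : Finset V) (D : V → ℤ) :
    LinEquiv G D (fun v => D v + (∑ w ∈ S, (G.E v w : ℤ)) - (if v ∈ S then (G.val v : ℤ) else 0)) := by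
  classical
  induction S using Finset.induction_on with
  | empty =>
    have h : LinEquiv G D D := Relation.ReflTransGen.refl
    convert h using 1
    funext v
    simp
  | @insert a S ha ih =>
    refine ih.tail ⟨a, ?_⟩
    funext v
    simp only [lend, Finset.sum_insert ha]
    by_cases hv : v = a
    · subst hv
      simp [ha, G.loopless]
    · have hvi : (v ∈ insert a S) ↔ v ∈ S := by simp [hv]
      rw [if_neg hv, G.symm a v]
      simp only [hvi]
      ring

/-- Fix `q ∈ V` and a tree ordering of `V` coming from a spanning tree rooted at `q`
(`q` is first, and every other vertex has a neighbor — its parent — earlier in the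
order).  If `D'` is minimal under `≺` among all divisors linearly equivalent to `D`
that are nonnegative away from `q`, then `D'` is `q`-reduced. -/
theorem prec_minimal_qreduced (G : Multigraph V) (hG : G.Connected) (q : V)
    (ord : V ≃ Fin (Fintype.card V)) (hq : (ord q : ℕ) = 0)
    (htree : ∀ v, v ≠ q → ∃ w, 0 < G.E w v ∧ ord w < ord v)
    (D D' : V → ℤ) (hequiv : LinEquiv G D D') (hpos : ∀ v, v ≠ q → 0 ≤ D' v)
    (hmin : ∀ D'' : V → ℤ, LinEquiv G D D'' → (∀ v, v ≠ q → 0 ≤ D'' v) →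
      ¬ Prec ord D'' D') :
    QReduced G q D' := by
  classical
  refine ⟨hpos, ?_⟩
  intro S hSne hSq
  by_contra hcon
  push_neg at hcon
  -- the fired divisor
  set D'' : V → ℤ :=
    fun v => D' v + (∑ w ∈ S, (G.E v w : ℤ)) - (if v ∈ S then (G.val v : ℤ) else 0) with hD''
  have hval : ∀ v ∈ S, (if v ∈ S then (G.val v : ℤ) else 0) - ∑ w ∈ S, (G.E v w : ℤ)
      = (outdegS G S v : ℤ) := by
    intro v hv
    have : (G.val v : ℤ) = ∑ w ∈ S, (G.E v w : ℤ) + ∑ w ∈ Sᶜ, (G.E v w : ℤ) := by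
      rw [Multigraph.val]
      push_cast
      rw [Finset.sum_add_sum_compl]
    simp [hv, this, outdegS]
  have hDS : ∀ v ∈ S, D'' v = D' v - (outdegS G S v : ℤ) := by
    intro v hv
    rw [hD'']
    rw [← hval v hv]
    ring
  have hDnS : ∀ v ∉ S, D'' v = D' v + ∑ w ∈ S, (G.E v w : ℤ) := by
    intro v hv
    simp [hD'', hv]
  have hequiv'' : LinEquiv G D D'' := hequiv.trans (linEquiv_fire G S D')
  have hpos'' : ∀ v, v ≠ q → 0 ≤ D'' v := by
    intro v hv
    by_cases hvS : v ∈ S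
    · rw [hDS v hvS]
      linarith [hcon v hvS]
    · rw [hDnS v hvS]
      have : 0 ≤ ∑ w ∈ S, (G.E v w : ℤ) :=
        Finset.sum_nonneg fun w _ => by positivity
      linarith [hpos v hv]
  apply hmin D'' hequiv'' hpos''
  -- degree is preserved
  have hdeg : divDeg D'' = divDeg D' := by
    simp only [divDeg, hD'']
    rw [Finset.sum_sub_distrib, Finset.sum_add_distrib]
    have h1 : ∑ v : V, ∑ w ∈ S, (G.E v w : ℤ) = ∑ w ∈ S, (G.val w : ℤ) := by
      rw [Finset.sum_comm]
      refine Finset.sum_congr rfl fun w _ => ?_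
      simp only [Multigraph.val]
      push_cast
      exact Finset.sum_congr rfl fun v _ => by rw [G.symm]
    have h2 : ∑ v : V, (if v ∈ S then (G.val v : ℤ) else 0) = ∑ w ∈ S, (G.val w : ℤ) := by
      rw [Finset.sum_ite_mem, Finset.univ_inter]
    rw [h1, h2]
    ring
  -- minimal vertex of S
  obtain ⟨v₀, hv₀S, hv₀min⟩ := S.exists_min_image (fun s => ord s) hSne
  obtain ⟨w₀, hw₀e, hw₀lt⟩ := htree v₀ (hSq v₀ hv₀S)
  have hw₀S : w₀ ∉ S := fun h => absurd hw₀lt (not_lt.mpr (hv₀min w₀ h))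
  have hw₀T : D' w₀ < D'' w₀ := by
    rw [hDnS w₀ hw₀S]
    have h1 : (G.E w₀ v₀ : ℤ) ≤ ∑ w ∈ S, (G.E w₀ w : ℤ) :=
      Finset.single_le_sum (f := fun w => (G.E w₀ w : ℤ)) (fun w _ => by positivity) hv₀S
    have h2 : (0 : ℤ) < (G.E w₀ v₀ : ℤ) := by exact_mod_cast hw₀e
    linarith
  -- first vertex where they differ
  set T : Finset V := Finset.univ.filter (fun v => D'' v ≠ D' v) with hT
  have hTne : T.Nonempty := ⟨w₀, by simp [hT, ne_of_gt hw₀T]⟩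
  obtain ⟨u, huT, humin⟩ := T.exists_min_image (fun s => ord s) hTne
  have huS : u ∉ S := by
    intro huS
    have h1 : ord u ≤ ord w₀ := humin w₀ (by simp [hT, ne_of_gt hw₀T])
    have h2 : ord v₀ ≤ ord u := hv₀min u huS
    exact absurd (lt_of_le_of_lt h1 hw₀lt) (not_lt.mpr h2)
  have huNe : D'' u ≠ D' u := by
    have h := huT
    simp only [hT, Finset.mem_filter, Finset.mem_univ, true_and] at h
    exact h
  have huGt : D' u < D'' u := by
    rw [hDnS u huS] at huNe ⊢
    have hnn : 0 ≤ ∑ w ∈ S, (G.E u w : ℤ) :=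
      Finset.sum_nonneg fun w _ => by positivity
    rcases lt_or_eq_of_le hnn with h | h
    · linarith
    · exact absurd (by linarith : D' u + ∑ w ∈ S, (G.E u w : ℤ) = D' u) huNe
  refine Or.inr ⟨hdeg, ord u, ?_, ?_⟩
  · simpa using huGt
  · intro j hj
    by_contra hne
    have hmem : ord.symm j ∈ T := by
      simp only [hT, Finset.mem_filter, Finset.mem_univ, true_and]
      exact hne
    have hle := humin _ hmem
    simp only [Equiv.apply_symm_apply] at hle
    exact absurd (lt_of_lt_of_le hj hle) (lt_irrefl _)
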